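/- (S_start, S_start, [0, ∞), [0, ∞))↓ holds: in SSynch with rigid movements, two finite-state robots running Algorithm 1, both starting in state S_start, solve Rendezvous from every pair of initial positions in ℝ², for every pair of unit distances u_r, u_s > 0, every pair of local orthogonal coordinate frames, and every fair schedule. In particular, Rendezvous of two finite-state robots in SSynch is solvable with six internal states, even without unit distance agreement. -/

import Mathlib

/-- Points in the plane. -/
abbrev Pt := EuclideanSpace ℝ (Fin 2)

/-- Observed directions. -/
inductive Dir | left | right
deriving DecidableEq

/-- The six internal states of Algorithm 1. -/
inductive St | start | s1 | s2 (d : Dir) | s3 | finish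
deriving DecidableEq

/-- A local coordinate frame: an orthogonal linear map of the plane. -/
abbrev Frame := Pt ≃ₗᵢ[ℝ] Pt

/-- Observed direction of a local vector `v`: `right` if its first coordinate is
positive, or is zero with positive second coordinate; `left` otherwise. -/
noncomputable def obsDir (v : Pt) : Dir :=
  if 0 < v 0 ∨ (v 0 = 0 ∧ 0 < v 1) then Dir.right else Dir.left

/-- Local vector observed by a robot with unit distance `u` and frame `A`,
located at `p`, looking at the other robot at `q`. -/
noncomputable def obsVec (u : ℝ) (A : Frame) (p q : Pt) : Pt := u⁻¹ • (A (q - p))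

/-- Observed distance. -/
noncomputable def obsDist (u : ℝ) (p q : Pt) : ℝ := ‖q - p‖ / u

/-- Algorithm 1: given the current state, the observed distance `d` and the
observed direction `dir`, returns the new state and the coefficient `μ` such
that the (global) destination is `p + μ • (q - p)` (i.e. local destination `μ • v`). -/
noncomputable def algo1 (s : St) (d : ℝ) (dir : Dir) : St × ℝ :=
  if d = 0 then (s, 0)
  else match s with
  | .start => if d < 1 then (.s1, 1 - 1/d) else (.s2 dir, 1)
  | .s1 => if d ≤ 1 then (.finish, 0) else (.s2 dir, 1)
  | .s2 d' =>
      if dir = d' then (.finish, 1)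
      else if d < 1/2 then (.finish, 0)
      else if d < 1 then (.s3, 1/2)
      else (.s2 d', 1/2)
  | .s3 => if d < 1/4 then (.finish, 0) else (.finish, 1)
  | .finish => if d ≤ 1 then (.finish, 0) else (.finish, 1)

/-- A configuration: positions and internal states of the two robots
(robot `r` is `false`, robot `s` is `true`). -/
structure Config where
  pos : Bool → Pt
  st : Bool → St

/-- Result (new position, new state) of one activation of robot `i`. -/
noncomputable def stepRobot (u : Bool → ℝ) (A : Bool → Frame) (c : Config) (i : Bool) :
    Pt × St :=
  let p := c.pos i
  let q := c.pos (!i)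
  let d := obsDist (u i) p q
  let dir := obsDir (obsVec (u i) (A i) p q)
  let r := algo1 (c.st i) d dir
  (p + r.2 • (q - p), r.1)

/-- One synchronous round in which exactly the robots `i` with `act i = true`
are activated; both activated robots observe the same (pre-round) configuration,
and rigidly reach their computed destinations. -/
noncomputable def stepConfig (u : Bool → ℝ) (A : Bool → Frame) (act : Bool → Bool)
    (c : Config) : Config where
  pos i := if act i then (stepRobot u A c i).1 else c.pos i
  st i := if act i then (stepRobot u A c i).2 else c.st i

/-- The configuration after `n` rounds of the SSynch execution of Algorithm 1
under schedule `sched`, starting from `c0`. -/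
noncomputable def run (u : Bool → ℝ) (A : Bool → Frame) (sched : ℕ → Bool → Bool)
    (c0 : Config) : ℕ → Config
  | 0 => c0
  | n + 1 => stepConfig u A (sched n) (run u A sched c0 n)

/-- A legal fair SSynch schedule: at every round a nonempty set of robots is
activated, and each robot is activated infinitely often. -/
def FairSched (sched : ℕ → Bool → Bool) : Prop :=
  (∀ n, sched n false = true ∨ sched n true = true) ∧
  (∀ i n, ∃ m, n ≤ m ∧ sched m i = true)

/-- Rendezvous is solved: from some round on, the two robots occupy the same
point and never move again. -/
noncomputable def Solves (u : Bool → ℝ) (A : Bool → Frame) (sched : ℕ → Bool → Bool)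
    (c0 : Config) : Prop :=
  ∃ N : ℕ, ∀ n, N ≤ n → ∀ i, (run u A sched c0 n).pos i = (run u A sched c0 N).pos false

/-- Conditions on a robot: one of the six internal states, or `S₂⁼` / `S₂≠`. -/
inductive Cond | start | s1 | s2 (d : Dir) | s2eq | s2ne | s3 | finish

/-- A robot in state `s` whose currently observed direction is `dir`
satisfies the condition. -/
def Cond.sat : Cond → St → Dir → Prop
  | .start, s, _ => s = .start
  | .s1, s, _ => s = .s1
  | .s2 d', s, _ => s = .s2 d'
  | .s2eq, s, dir => s = .s2 dir
  | .s2ne, s, dir => ∃ d', s = St.s2 d' ∧ d' ≠ dir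
  | .s3, s, _ => s = .s3
  | .finish, s, _ => s = .finish

/-- `(S_a, S_b, I_a, I_b)↓` : for every choice of the units and frames, from
every configuration in which robot `r` satisfies condition `Ca` with observed
distance in `Ia` and robot `s` satisfies condition `Cb` with observed distance
in `Ib`, every fair SSynch execution of Algorithm 1 solves Rendezvous. -/
noncomputable def Down (Ca Cb : Cond) (Ia Ib : Set ℝ) : Prop :=
  ∀ (u : Bool → ℝ) (A : Bool → Frame), (∀ i, 0 < u i) →
    ∀ c0 : Config,
      Ca.sat (c0.st false)
        (obsDir (obsVec (u false) (A false) (c0.pos false) (c0.pos true))) →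
      obsDist (u false) (c0.pos false) (c0.pos true) ∈ Ia →
      Cb.sat (c0.st true)
        (obsDir (obsVec (u true) (A true) (c0.pos true) (c0.pos false))) →
      obsDist (u true) (c0.pos true) (c0.pos false) ∈ Ib →
      ∀ sched : ℕ → Bool → Bool, FairSched sched → Solves u A sched c0


namespace RVaux

/-- Flip a direction. -/
def dflip : Dir → Dir
  | .left => .right
  | .right => .left

@[simp] lemma dflip_dflip (e : Dir) : dflip (dflip e) = e := by cases e <;> rfl

lemma dflip_ne (e : Dir) : dflip e ≠ e := by cases e <;> simp [dflip]

lemma eq_dflip_of_ne {d e : Dir} (h : d ≠ e) : d = dflip e := by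
  cases d <;> cases e <;> simp_all [dflip]

/-- Direction observed by a robot whose "positive orientation" direction is `e`,
when the current line coefficient is `l`. -/
noncomputable def sdir (e : Dir) (l : ℝ) : Dir := if 0 < l then e else dflip e

lemma sdir_pos {e : Dir} {l : ℝ} (h : 0 < l) : sdir e l = e := if_pos h
lemma sdir_nonpos {e : Dir} {l : ℝ} (h : ¬ 0 < l) : sdir e l = dflip e := if_neg h

lemma sdir_mul_pos (e : Dir) {c : ℝ} (hc : 0 < c) (l : ℝ) : sdir e (c * l) = sdir e l := by
  unfold sdir
  rcases lt_trichotomy l 0 with h | h | h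
  · rw [if_neg (by nlinarith), if_neg (by nlinarith)]
  · simp [h]
  · rw [if_pos (by nlinarith), if_pos h]

lemma sdir_neg (e : Dir) {l : ℝ} (hl : l ≠ 0) : sdir e (-l) = dflip (sdir e l) := by
  unfold sdir
  rcases hl.lt_or_gt with h | h
  · rw [if_pos (by linarith), if_neg (not_lt.2 h.le)]; simp
  · rw [if_neg (by simp [h.le]), if_pos h]

lemma sdir_dflip_neg (e : Dir) {l : ℝ} (hl : l ≠ 0) : sdir (dflip e) (-l) = sdir e l := by
  unfold sdir
  rcases hl.lt_or_gt with h | h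
  · rw [if_pos (by linarith), if_neg (not_lt.2 h.le)]
  · rw [if_neg (by simp [h.le]), if_pos h, dflip_dflip]

/-! ### Evaluation lemmas for `algo1` -/

@[simp] lemma algo1_zero (s : St) (dir : Dir) : algo1 s 0 dir = (s, 0) := by simp [algo1]

variable {d : ℝ} {dir d' : Dir}

lemma algo1_start_lt (h0 : d ≠ 0) (h : d < 1) (dir : Dir) :
    algo1 .start d dir = (.s1, 1 - 1/d) := by simp [algo1, h0, h]

lemma algo1_start_ge (h0 : d ≠ 0) (h : ¬ d < 1) (dir : Dir) :
    algo1 .start d dir = (.s2 dir, 1) := by simp [algo1, h0, h]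

lemma algo1_s1_le (h0 : d ≠ 0) (h : d ≤ 1) (dir : Dir) :
    algo1 .s1 d dir = (.finish, 0) := by simp [algo1, h0, h]

lemma algo1_s1_gt (h0 : d ≠ 0) (h : ¬ d ≤ 1) (dir : Dir) :
    algo1 .s1 d dir = (.s2 dir, 1) := by simp [algo1, h0, h]

lemma algo1_s2_eq (h0 : d ≠ 0) (dir : Dir) :
    algo1 (.s2 dir) d dir = (.finish, 1) := by simp [algo1, h0]

lemma algo1_s2_lt_half (h0 : d ≠ 0) (hne : dir ≠ d') (h : d < 1/2) :
    algo1 (.s2 d') d dir = (.finish, 0) := by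
  simp [algo1, h0, hne, show d < 2⁻¹ by linarith]

lemma algo1_s2_mid (h0 : d ≠ 0) (hne : dir ≠ d') (h1 : ¬ d < 1/2) (h2 : d < 1) :
    algo1 (.s2 d') d dir = (.s3, 1/2) := by
  simp [algo1, h0, hne, h2, show (2⁻¹:ℝ) ≤ d by rw [not_lt] at h1; linarith]

lemma algo1_s2_ge (h0 : d ≠ 0) (hne : dir ≠ d') (h2 : ¬ d < 1) :
    algo1 (.s2 d') d dir = (.s2 d', 1/2) := by
  rw [not_lt] at h2
  simp [algo1, h0, hne, not_lt.2 h2, show (2⁻¹:ℝ) ≤ d by linarith]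

lemma algo1_s3_lt (h0 : d ≠ 0) (h : d < 1/4) (dir : Dir) :
    algo1 .s3 d dir = (.finish, 0) := by simp [algo1, h0, show d < 4⁻¹ by linarith]

lemma algo1_s3_ge (h0 : d ≠ 0) (h : ¬ d < 1/4) (dir : Dir) :
    algo1 .s3 d dir = (.finish, 1) := by
  rw [not_lt] at h
  simp [algo1, h0, show ¬ d < 4⁻¹ from not_lt.2 (by linarith)]

lemma algo1_finish_le (h0 : d ≠ 0) (h : d ≤ 1) (dir : Dir) :
    algo1 .finish d dir = (.finish, 0) := by simp [algo1, h0, h]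

lemma algo1_finish_gt (h0 : d ≠ 0) (h : ¬ d ≤ 1) (dir : Dir) :
    algo1 .finish d dir = (.finish, 1) := by simp [algo1, h0, h]

end RVaux
namespace RVaux

/-- Scalar configuration: states of the two robots and the coefficient `l`
such that `pos true - pos false = l • w₀`. -/
abbrev SC := St × St × ℝ

/-- Scalar model of one round. -/
noncomputable def sstep (cr cs : ℝ) (er es : Dir) (act : Bool → Bool) (x : SC) : SC :=
  ⟨(if act false then (algo1 x.1 (cr * |x.2.2|) (sdir er x.2.2)).1 else x.1),
   (if act true then (algo1 x.2.1 (cs * |x.2.2|) (sdir es x.2.2)).1 else x.2.1),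
   (1 - (if act false then (algo1 x.1 (cr * |x.2.2|) (sdir er x.2.2)).2 else 0)
      - (if act true then (algo1 x.2.1 (cs * |x.2.2|) (sdir es x.2.2)).2 else 0)) * x.2.2⟩

/-- Scalar model of the run. -/
noncomputable def srun (cr cs : ℝ) (er es : Dir) (sched : ℕ → Bool → Bool) (x0 : SC) :
    ℕ → SC
  | 0 => x0
  | n + 1 => sstep cr cs er es (sched n) (srun cr cs er es sched x0 n)

/-- All parameters of a scalar run. -/
structure Par where
  cr : ℝ
  cs : ℝ
  er : Dir
  es : Dir
  sched : ℕ → Bool → Bool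
  x0 : SC
  hcr : 0 < cr
  hcs : 0 < cs
  hf : FairSched sched

noncomputable def Par.X (P : Par) (n : ℕ) : SC := srun P.cr P.cs P.er P.es P.sched P.x0 n

/-- Goal of the scalar analysis: the coefficient eventually vanishes. -/
def Par.Z (P : Par) : Prop := ∃ m, (P.X m).2.2 = 0

lemma Par.X_succ (P : Par) (n : ℕ) :
    P.X (n+1) = sstep P.cr P.cs P.er P.es (P.sched n) (P.X n) := rfl

/-- Swapping the roles of the two robots. -/
def Sw (x : SC) : SC := (x.2.1, x.1, -x.2.2)

noncomputable def Par.swap (P : Par) : Par where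
  cr := P.cs
  cs := P.cr
  er := dflip P.es
  es := dflip P.er
  sched := fun n i => P.sched n (!i)
  x0 := Sw P.x0
  hcr := P.hcs
  hcs := P.hcr
  hf := by
    obtain ⟨h1, h2⟩ := P.hf
    refine ⟨fun n => (h1 n).symm.imp (fun h => h) (fun h => h), fun i n => ?_⟩
    obtain ⟨m, hm, hs⟩ := h2 (!i) n
    exact ⟨m, hm, hs⟩

lemma sstep_swap (cr cs : ℝ) (er es : Dir) (act : Bool → Bool) (x : SC) :
    sstep cs cr (dflip es) (dflip er) (fun i => act (!i)) (Sw x) = Sw (sstep cr cs er es act x) := by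
  rcases x with ⟨a, b, l⟩
  by_cases hl : l = 0
  · subst hl
    simp [sstep, Sw, neg_zero]
  · have h1 : sdir (dflip es) (-l) = sdir es l := sdir_dflip_neg _ hl
    have h2 : sdir (dflip er) (-l) = sdir er l := sdir_dflip_neg _ hl
    simp only [sstep, Sw, abs_neg, h1, h2, Bool.not_false, Bool.not_true, Prod.mk.injEq]
    exact ⟨trivial, trivial, by ring⟩

lemma Par.swap_X (P : Par) (n : ℕ) : P.swap.X n = Sw (P.X n) := by
  induction n with
  | zero => rfl
  | succ n ih =>
    rw [Par.X_succ, Par.X_succ, ih]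
    exact sstep_swap P.cr P.cs P.er P.es (P.sched n) (P.X n)

lemma Par.swap_Z (P : Par) (h : P.swap.Z) : P.Z := by
  obtain ⟨m, hm⟩ := h
  rw [Par.swap_X] at hm
  exact ⟨m, by simpa [Sw, neg_eq_zero] using hm⟩

/-- Wait (using fairness) until robot `i` is activated; meanwhile nothing happens. -/
lemma until_act (P : Par) (i : Bool) (n : ℕ)
    (hkeep : ∀ act : Bool → Bool, act i = false →
      sstep P.cr P.cs P.er P.es act (P.X n) = P.X n) :
    ∃ m, n ≤ m ∧ P.X m = P.X n ∧ P.sched m i = true := by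
  obtain ⟨m0, hm0, hact⟩ := P.hf.2 i n
  have hex : ∃ k, P.sched (n + k) i = true := ⟨m0 - n, by rwa [Nat.add_sub_cancel' hm0]⟩
  have key : ∀ j, j ≤ Nat.find hex → P.X (n + j) = P.X n := by
    intro j
    induction j with
    | zero => intro _; rfl
    | succ j ih =>
      intro hj
      have hju : P.sched (n + j) i = false := by
        have hmin := Nat.find_min hex (show j < Nat.find hex by omega)
        cases h' : P.sched (n + j) i
        · rfl
        · exact absurd h' hmin
      have : n + (j + 1) = (n + j) + 1 := rfl
      rw [this, Par.X_succ, ih (by omega), hkeep _ hju]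
  exact ⟨n + Nat.find hex, Nat.le_add_right _ _, key _ le_rfl, Nat.find_spec hex⟩

end RVaux
namespace RVaux

lemma pt_ne {v : Pt} (hv : v ≠ 0) : ¬ (v 0 = 0 ∧ v 1 = 0) := by
  rintro ⟨h0, h1⟩
  apply hv
  ext i
  fin_cases i
  · exact h0
  · exact h1

lemma obsDir_smul_pos {c : ℝ} (hc : 0 < c) (v : Pt) : obsDir (c • v) = obsDir v := by
  have h0 : (c • v) 0 = c * v 0 := rfl
  have h1 : (c • v) 1 = c * v 1 := rfl
  have hiff : (0 < (c • v) 0 ∨ ((c • v) 0 = 0 ∧ 0 < (c • v) 1)) ↔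
      (0 < v 0 ∨ (v 0 = 0 ∧ 0 < v 1)) := by
    rw [h0, h1, mul_pos_iff_of_pos_left hc, mul_pos_iff_of_pos_left hc,
      mul_eq_zero]
    simp [hc.ne']
  unfold obsDir
  exact if_congr hiff rfl rfl

lemma obsDir_smul_neg {c : ℝ} (hc : c < 0) {v : Pt} (hv : v ≠ 0) :
    obsDir (c • v) = dflip (obsDir v) := by
  have hv' := pt_ne hv
  have h0 : (c • v) 0 = c * v 0 := rfl
  have h1 : (c • v) 1 = c * v 1 := rfl
  unfold obsDir
  rw [h0, h1]
  rcases lt_trichotomy (v 0) 0 with h | h | h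
  · have hL : (0 < c * v 0 ∨ (c * v 0 = 0 ∧ 0 < c * v 1)) := Or.inl (by nlinarith)
    have hR : ¬ (0 < v 0 ∨ (v 0 = 0 ∧ 0 < v 1)) := by
      push_neg
      exact ⟨h.le, fun hh => absurd hh h.ne⟩
    rw [if_pos hL, if_neg hR]
    rfl
  · rcases lt_trichotomy (v 1) 0 with h' | h' | h'
    · have hL : (0 < c * v 0 ∨ (c * v 0 = 0 ∧ 0 < c * v 1)) :=
        Or.inr ⟨by rw [h, mul_zero], by nlinarith⟩
      have hR : ¬ (0 < v 0 ∨ (v 0 = 0 ∧ 0 < v 1)) := by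
        push_neg
        exact ⟨h.le, fun _ => h'.le⟩
      rw [if_pos hL, if_neg hR]
      rfl
    · exact absurd ⟨h, h'⟩ hv'
    · have hR : (0 < v 0 ∨ (v 0 = 0 ∧ 0 < v 1)) := Or.inr ⟨h, h'⟩
      have hL : ¬ (0 < c * v 0 ∨ (c * v 0 = 0 ∧ 0 < c * v 1)) := by
        push_neg
        exact ⟨by nlinarith, fun _ => by nlinarith⟩
      rw [if_neg hL, if_pos hR]
      rfl
  · have hR : (0 < v 0 ∨ (v 0 = 0 ∧ 0 < v 1)) := Or.inl h
    have hL : ¬ (0 < c * v 0 ∨ (c * v 0 = 0 ∧ 0 < c * v 1)) := by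
      push_neg
      refine ⟨by nlinarith, fun hh => absurd hh (by nlinarith)⟩
    rw [if_neg hL, if_pos hR]
    rfl

lemma algo1_congr {u : ℝ} (hu : 0 < u) (A : Frame) {p q : Pt} {w : Pt} (hw : w ≠ 0)
    {l : ℝ} (h : q - p = l • w) (s : St) :
    algo1 s (obsDist u p q) (obsDir (obsVec u A p q)) =
      algo1 s ((‖w‖ / u) * |l|) (sdir (obsDir (A w)) l) := by
  have hd : obsDist u p q = (‖w‖ / u) * |l| := by
    rw [obsDist, h, norm_smul, Real.norm_eq_abs]; ring
  by_cases hl : l = 0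
  · subst hl; rw [hd]; simp
  · rw [hd]
    congr 1
    have hv : obsVec u A p q = (u⁻¹ * l) • A w := by
      rw [obsVec, h, map_smul, smul_smul]
    have hAw : A w ≠ 0 := by
      simp [hw]
    rw [hv]
    rcases Ne.lt_or_gt hl with h' | h'
    · rw [obsDir_smul_neg (by exact mul_neg_of_pos_of_neg (inv_pos.2 hu) h') hAw,
        sdir_nonpos (not_lt.2 h'.le)]
    · rw [obsDir_smul_pos (by positivity) (A w), sdir_pos h']

end RVaux
namespace RVaux

/-- Simulation of the planar run by the scalar run. -/
theorem sim (u : Bool → ℝ) (A : Bool → Frame) (sched : ℕ → Bool → Bool) (c0 : Config)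
    (hu : ∀ i, 0 < u i) (w : Pt) (hw : w ≠ 0) (h0 : c0.pos true - c0.pos false = w) :
    ∀ n,
      (run u A sched c0 n).st false =
        (srun (‖w‖ / u false) (‖w‖ / u true) (obsDir (A false w)) (obsDir (A true (-w)))
          sched (c0.st false, c0.st true, 1) n).1 ∧
      (run u A sched c0 n).st true =
        (srun (‖w‖ / u false) (‖w‖ / u true) (obsDir (A false w)) (obsDir (A true (-w)))
          sched (c0.st false, c0.st true, 1) n).2.1 ∧
      (run u A sched c0 n).pos true - (run u A sched c0 n).pos false =
        (srun (‖w‖ / u false) (‖w‖ / u true) (obsDir (A false w)) (obsDir (A true (-w)))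
          sched (c0.st false, c0.st true, 1) n).2.2 • w := by
  intro n
  induction n with
  | zero =>
    refine ⟨rfl, rfl, ?_⟩
    show c0.pos true - c0.pos false = (1:ℝ) • w
    rw [h0, one_smul]
  | succ n ih =>
    obtain ⟨h1, h2, h3⟩ := ih
    set x := srun (‖w‖ / u false) (‖w‖ / u true) (obsDir (A false w)) (obsDir (A true (-w)))
      sched (c0.st false, c0.st true, 1) n with hxdef
    set c := run u A sched c0 n with hcdef
    -- the two algo1 calls agree with the scalar model
    have hAr : algo1 x.1 (obsDist (u false) (c.pos false) (c.pos true))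
          (obsDir (obsVec (u false) (A false) (c.pos false) (c.pos true))) =
        algo1 x.1 ((‖w‖ / u false) * |x.2.2|) (sdir (obsDir (A false w)) x.2.2) := by
      have := algo1_congr (hu false) (A false) hw h3 (c.st false)
      rw [h1] at this
      exact this
    have hAs : algo1 x.2.1 (obsDist (u true) (c.pos true) (c.pos false))
          (obsDir (obsVec (u true) (A true) (c.pos true) (c.pos false))) =
        algo1 x.2.1 ((‖w‖ / u true) * |x.2.2|) (sdir (obsDir (A true (-w))) x.2.2) := by
      have h3' : c.pos false - c.pos true = x.2.2 • (-w) := by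
        rw [smul_neg, ← h3]; abel
      have := algo1_congr (hu true) (A true) (by simpa using hw) h3' (c.st true)
      rw [norm_neg, h2] at this
      exact this
    have hq : c.pos true = c.pos false + x.2.2 • w := by
      rw [← h3]; abel
    have hrunsucc : run u A sched c0 (n+1) = stepConfig u A (sched n) c := rfl
    have hsruns : srun (‖w‖ / u false) (‖w‖ / u true) (obsDir (A false w))
        (obsDir (A true (-w))) sched (c0.st false, c0.st true, 1) (n+1) =
        sstep (‖w‖ / u false) (‖w‖ / u true) (obsDir (A false w)) (obsDir (A true (-w)))
          (sched n) x := rfl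
    rw [hrunsucc, hsruns]
    cases hF : sched n false <;> cases hT : sched n true <;>
      · refine ⟨?_, ?_, ?_⟩
        · simp only [stepConfig, sstep, hF, hT, stepRobot, Bool.not_false, if_true, if_false,
            Bool.false_eq_true, hAr, h1]
        · simp only [stepConfig, sstep, hF, hT, stepRobot, Bool.not_true, if_true, if_false,
            Bool.false_eq_true, hAs, h2]
        · simp only [stepConfig, sstep, hF, hT, stepRobot, Bool.not_false, Bool.not_true,
            if_true, if_false, Bool.false_eq_true, h1, h2, hAr, hAs]
          rw [hq]
          module

end RVaux
namespace RVaux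

lemma dne {c l : ℝ} (hc : 0 < c) (hl : l ≠ 0) : c * |l| ≠ 0 :=
  (mul_pos hc (abs_pos.2 hl)).ne'

lemma newd (c l d : ℝ) : d * |c * l| = |c| * (d * |l|) := by
  rw [abs_mul]; ring

/-- robot at `s2` whose stored direction differs from the currently observed one -/
def ne2 (e : Dir) (l : ℝ) (s : St) : Prop := ∃ d, s = St.s2 d ∧ d ≠ sdir e l
/-- robot at `s2` whose stored direction equals the currently observed one -/
def eq2 (e : Dir) (l : ℝ) (s : St) : Prop := s = St.s2 (sdir e l)

lemma ne2_mul_pos {e : Dir} {l : ℝ} {s : St} {c : ℝ} (hc : 0 < c) (h : ne2 e l s) :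
    ne2 e (c * l) s := by
  obtain ⟨d, hd, hne⟩ := h
  exact ⟨d, hd, by rwa [sdir_mul_pos e hc]⟩

lemma eq2_mul_pos {e : Dir} {l : ℝ} {s : St} {c : ℝ} (hc : 0 < c) (h : eq2 e l s) :
    eq2 e (c * l) s := by
  unfold eq2 at *
  rwa [sdir_mul_pos e hc]

/-- evaluating one scalar step -/
lemma step_eval (P : Par) (m : ℕ) (a b : St) (l : ℝ) (hx : P.X m = (a, b, l))
    {a' b' : St} {mr ms : ℝ}
    (har : algo1 a (P.cr * |l|) (sdir P.er l) = (a', mr))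
    (has : algo1 b (P.cs * |l|) (sdir P.es l) = (b', ms)) :
    P.X (m+1) = (if P.sched m false = true then a' else a,
                 if P.sched m true = true then b' else b,
                 (1 - (if P.sched m false = true then mr else 0)
                    - (if P.sched m true = true then ms else 0)) * l) := by
  rw [P.X_succ, hx]
  simp only [sstep, har, has]

lemma step_r (P : Par) (m : ℕ) (a b : St) (l : ℝ) (hx : P.X m = (a, b, l))
    {a' b' : St} {mr ms : ℝ}
    (har : algo1 a (P.cr * |l|) (sdir P.er l) = (a', mr))
    (has : algo1 b (P.cs * |l|) (sdir P.es l) = (b', ms))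
    (hF : P.sched m false = true) (hT : P.sched m true = false) :
    P.X (m+1) = (a', b, (1 - mr) * l) := by
  rw [step_eval P m a b l hx har has, hF, hT]
  norm_num

lemma step_s (P : Par) (m : ℕ) (a b : St) (l : ℝ) (hx : P.X m = (a, b, l))
    {a' b' : St} {mr ms : ℝ}
    (har : algo1 a (P.cr * |l|) (sdir P.er l) = (a', mr))
    (has : algo1 b (P.cs * |l|) (sdir P.es l) = (b', ms))
    (hF : P.sched m false = false) (hT : P.sched m true = true) :
    P.X (m+1) = (a, b', (1 - ms) * l) := by
  rw [step_eval P m a b l hx har has, hF, hT]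
  norm_num

lemma step_both (P : Par) (m : ℕ) (a b : St) (l : ℝ) (hx : P.X m = (a, b, l))
    {a' b' : St} {mr ms : ℝ}
    (har : algo1 a (P.cr * |l|) (sdir P.er l) = (a', mr))
    (has : algo1 b (P.cs * |l|) (sdir P.es l) = (b', ms))
    (hF : P.sched m false = true) (hT : P.sched m true = true) :
    P.X (m+1) = (a', b', (1 - mr - ms) * l) := by
  rw [step_eval P m a b l hx har has, hF, hT]
  norm_num

/-- if robot `false` stays put, a round not activating robot `true` changes nothing -/
lemma keep_r (P : Par) (a b : St) (l : ℝ)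
    (har : algo1 a (P.cr * |l|) (sdir P.er l) = (a, 0)) :
    ∀ act : Bool → Bool, act true = false →
      sstep P.cr P.cs P.er P.es act (a, b, l) = (a, b, l) := by
  intro act h
  cases haf : act false <;> simp [sstep, h, haf, har]

/-- if robot `true` stays put, a round not activating robot `false` changes nothing -/
lemma keep_s (P : Par) (a b : St) (l : ℝ)
    (has : algo1 b (P.cs * |l|) (sdir P.es l) = (b, 0)) :
    ∀ act : Bool → Bool, act false = false →
      sstep P.cr P.cs P.er P.es act (a, b, l) = (a, b, l) := by
  intro act h
  cases hat : act true <;> simp [sstep, h, hat, has]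

/-! ### The classes of configurations -/

def C0 (P : Par) (x : SC) : Prop := x.2.2 ≠ 0 ∧ x.1 = .start ∧ x.2.1 = .start
def C2 (P : Par) (x : SC) : Prop := x.2.2 ≠ 0 ∧ ne2 P.er x.2.2 x.1 ∧ ne2 P.es x.2.2 x.2.1 ∧
  (1/2 ≤ P.cr * |x.2.2| ∨ 1/2 ≤ P.cs * |x.2.2|)
def C3 (P : Par) (x : SC) : Prop := x.2.2 ≠ 0 ∧ x.1 = .s1 ∧ x.2.1 = .s1 ∧
  1 ≤ P.cr * |x.2.2| ∧ 1 ≤ P.cs * |x.2.2| ∧ (1 < P.cr * |x.2.2| ∨ 1 < P.cs * |x.2.2|)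
def C4 (P : Par) (x : SC) : Prop := x.2.2 ≠ 0 ∧ x.1 = .finish ∧ P.cr * |x.2.2| ≤ 1 ∧
  x.2.1 = .s1 ∧ 1 < P.cs * |x.2.2|
def C5 (P : Par) (x : SC) : Prop := x.2.2 ≠ 0 ∧ x.1 = .s1 ∧ P.cr * |x.2.2| = 1 ∧
  x.2.1 = .start
def C6 (P : Par) (x : SC) : Prop := x.2.2 ≠ 0 ∧ x.1 = .finish ∧ P.cr * |x.2.2| = 1 ∧
  x.2.1 = .start
def C7 (P : Par) (x : SC) : Prop := x.2.2 ≠ 0 ∧ x.1 = .finish ∧ 1 < P.cr * |x.2.2| ∧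
  x.2.1 = .s1 ∧ P.cs * |x.2.2| ≤ 1
def C8 (P : Par) (x : SC) : Prop := x.2.2 ≠ 0 ∧ x.1 = .finish ∧ 1 < P.cr * |x.2.2| ∧
  x.2.1 = .finish ∧ P.cs * |x.2.2| ≤ 1
def C9 (P : Par) (x : SC) : Prop := x.2.2 ≠ 0 ∧ x.1 = .s1 ∧ P.cr * |x.2.2| ≤ 1 ∧
  eq2 P.es x.2.2 x.2.1
def C10 (P : Par) (x : SC) : Prop := x.2.2 ≠ 0 ∧ x.1 = .finish ∧ P.cr * |x.2.2| ≤ 1 ∧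
  eq2 P.es x.2.2 x.2.1
def C11 (P : Par) (x : SC) : Prop := x.2.2 ≠ 0 ∧ x.1 = .s3 ∧ 1/4 ≤ P.cr * |x.2.2| ∧
  P.cr * |x.2.2| < 1/2 ∧ ne2 P.es x.2.2 x.2.1
def C12 (P : Par) (x : SC) : Prop := x.2.2 ≠ 0 ∧ x.1 = .finish ∧ P.cr * |x.2.2| ≤ 1 ∧
  x.2.1 = .s3 ∧ 1/4 ≤ P.cs * |x.2.2|
def C13 (P : Par) (x : SC) : Prop := x.2.2 ≠ 0 ∧ x.1 = .s3 ∧ P.cr * |x.2.2| < 1/4 ∧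
  ne2 P.es x.2.2 x.2.1 ∧ 1/2 ≤ P.cs * |x.2.2|
def C14 (P : Par) (x : SC) : Prop := x.2.2 ≠ 0 ∧ x.1 = .s3 ∧ P.cr * |x.2.2| < 1/4 ∧
  x.2.1 = .s3 ∧ 1/4 ≤ P.cs * |x.2.2|
def C15 (P : Par) (x : SC) : Prop := x.2.2 ≠ 0 ∧ x.1 = .s3 ∧ 1/4 ≤ P.cr * |x.2.2| ∧
  x.2.1 = .finish ∧ P.cs * |x.2.2| ≤ 1
def C16 (P : Par) (x : SC) : Prop := x.2.2 ≠ 0 ∧ x.1 = .finish ∧ P.cr * |x.2.2| ≤ 1 ∧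
  ne2 P.es x.2.2 x.2.1 ∧ 1/2 ≤ P.cs * |x.2.2|

/-! ### Waiting classes -/

theorem lemC10 (P : Par) (n : ℕ) (h : C10 P (P.X n)) : P.Z := by
  rcases hx : P.X n with ⟨a, b, l⟩
  rw [hx] at h
  obtain ⟨hl, ha, hdr, hb⟩ := h
  simp only at hl ha hdr hb
  subst ha
  have hdnr := dne P.hcr hl
  have hdns := dne P.hcs hl
  have har := algo1_finish_le hdnr hdr (sdir P.er l)
  obtain ⟨m, hnm, hXm, hsm⟩ := until_act P true n (by rw [hx]; exact keep_r P _ b l har)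
  rw [hx] at hXm
  have has : algo1 b (P.cs * |l|) (sdir P.es l) = (.finish, 1) := by
    rw [hb]; exact algo1_s2_eq hdns _
  refine ⟨m+1, ?_⟩
  cases hF : P.sched m false
  · rw [step_s P m _ b l hXm har has hF hsm]
    norm_num
  · rw [step_both P m _ b l hXm har has hF hsm]
    norm_num

theorem lemC12 (P : Par) (n : ℕ) (h : C12 P (P.X n)) : P.Z := by
  rcases hx : P.X n with ⟨a, b, l⟩
  rw [hx] at h
  obtain ⟨hl, ha, hdr, hb, hds⟩ := h
  simp only at hl ha hdr hb hds
  subst ha; subst hb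
  have hdnr := dne P.hcr hl
  have hdns := dne P.hcs hl
  have har := algo1_finish_le hdnr hdr (sdir P.er l)
  obtain ⟨m, hnm, hXm, hsm⟩ := until_act P true n (by rw [hx]; exact keep_r P _ _ l har)
  rw [hx] at hXm
  have has : algo1 St.s3 (P.cs * |l|) (sdir P.es l) = (.finish, 1) :=
    algo1_s3_ge hdns (by linarith) _
  refine ⟨m+1, ?_⟩
  cases hF : P.sched m false
  · rw [step_s P m _ _ l hXm har has hF hsm]; norm_num
  · rw [step_both P m _ _ l hXm har has hF hsm]; norm_num

theorem lemC15 (P : Par) (n : ℕ) (h : C15 P (P.X n)) : P.Z := by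
  rcases hx : P.X n with ⟨a, b, l⟩
  rw [hx] at h
  obtain ⟨hl, ha, hdr, hb, hds⟩ := h
  simp only at hl ha hdr hb hds
  subst ha; subst hb
  have hdnr := dne P.hcr hl
  have hdns := dne P.hcs hl
  have has := algo1_finish_le hdns hds (sdir P.es l)
  obtain ⟨m, hnm, hXm, hsm⟩ := until_act P false n (by rw [hx]; exact keep_s P _ _ l has)
  rw [hx] at hXm
  have har : algo1 St.s3 (P.cr * |l|) (sdir P.er l) = (.finish, 1) :=
    algo1_s3_ge hdnr (by linarith) _
  refine ⟨m+1, ?_⟩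
  cases hT : P.sched m true
  · rw [step_r P m _ _ l hXm har has hsm hT]; norm_num
  · rw [step_both P m _ _ l hXm har has hsm hT]; norm_num

theorem lemC8 (P : Par) (n : ℕ) (h : C8 P (P.X n)) : P.Z := by
  rcases hx : P.X n with ⟨a, b, l⟩
  rw [hx] at h
  obtain ⟨hl, ha, hdr, hb, hds⟩ := h
  simp only at hl ha hdr hb hds
  subst ha; subst hb
  have hdnr := dne P.hcr hl
  have hdns := dne P.hcs hl
  have has := algo1_finish_le hdns hds (sdir P.es l)
  obtain ⟨m, hnm, hXm, hsm⟩ := until_act P false n (by rw [hx]; exact keep_s P _ _ l has)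
  rw [hx] at hXm
  have har : algo1 St.finish (P.cr * |l|) (sdir P.er l) = (.finish, 1) :=
    algo1_finish_gt hdnr (by linarith) _
  refine ⟨m+1, ?_⟩
  cases hT : P.sched m true
  · rw [step_r P m _ _ l hXm har has hsm hT]; norm_num
  · rw [step_both P m _ _ l hXm har has hsm hT]; norm_num

theorem lemC4 (P : Par) (n : ℕ) (h : C4 P (P.X n)) : P.Z := by
  rcases hx : P.X n with ⟨a, b, l⟩
  rw [hx] at h
  obtain ⟨hl, ha, hdr, hb, hds⟩ := h
  simp only at hl ha hdr hb hds
  subst ha; subst hb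
  have hdnr := dne P.hcr hl
  have hdns := dne P.hcs hl
  have har := algo1_finish_le hdnr hdr (sdir P.er l)
  obtain ⟨m, hnm, hXm, hsm⟩ := until_act P true n (by rw [hx]; exact keep_r P _ _ l har)
  rw [hx] at hXm
  have has : algo1 St.s1 (P.cs * |l|) (sdir P.es l) = (.s2 (sdir P.es l), 1) :=
    algo1_s1_gt hdns (by linarith) _
  refine ⟨m+1, ?_⟩
  cases hF : P.sched m false
  · rw [step_s P m _ _ l hXm har has hF hsm]; norm_num
  · rw [step_both P m _ _ l hXm har has hF hsm]; norm_num

theorem lemC14 (P : Par) (n : ℕ) (h : C14 P (P.X n)) : P.Z := by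
  rcases hx : P.X n with ⟨a, b, l⟩
  rw [hx] at h
  obtain ⟨hl, ha, hdr, hb, hds⟩ := h
  simp only at hl ha hdr hb hds
  subst ha; subst hb
  have hdnr := dne P.hcr hl
  have hdns := dne P.hcs hl
  have har : algo1 St.s3 (P.cr * |l|) (sdir P.er l) = (.finish, 0) :=
    algo1_s3_lt hdnr (by linarith) _
  have has : algo1 St.s3 (P.cs * |l|) (sdir P.es l) = (.finish, 1) :=
    algo1_s3_ge hdns (by linarith) _
  rcases P.hf.1 n with hF | hT
  · cases hT : P.sched n true
    · -- only r : goes to C12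
      have hnew := step_r P n _ _ l hx har has hF hT
      have heq : (1 - 0 : ℝ) * l = l := by ring
      rw [heq] at hnew
      apply lemC12 P (n+1)
      rw [hnew]
      exact ⟨hl, rfl, by linarith, rfl, hds⟩
    · refine ⟨n+1, ?_⟩
      rw [step_both P n _ _ l hx har has hF hT]
      norm_num
  · cases hF : P.sched n false
    · refine ⟨n+1, ?_⟩
      rw [step_s P n _ _ l hx har has hF hT]
      norm_num
    · refine ⟨n+1, ?_⟩
      rw [step_both P n _ _ l hx har has hF hT]
      norm_num

end RVaux
namespace RVaux

lemma d_half (d l : ℝ) : d * |1/2 * l| = 1/2 * (d * |l|) := by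
  rw [newd]; norm_num

lemma d_neg_half (d l : ℝ) : d * |(-(1/2)) * l| = 1/2 * (d * |l|) := by
  rw [newd]; norm_num

lemma ne2_neg_half {e : Dir} {l : ℝ} (hl : l ≠ 0) {s : St} (h : ne2 e l s) :
    eq2 e (-(1/2) * l) s := by
  obtain ⟨d, hd, hne⟩ := h
  unfold eq2
  rw [hd]
  congr 1
  rw [show (-(1/2) : ℝ) * l = (1/2) * (-l) by ring, sdir_mul_pos _ (by norm_num),
    sdir_neg _ hl]
  exact eq_dflip_of_ne hne

/-- exit of the `C16` loop when `d_s < 1` -/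
lemma lemC16_exit (P : Par) (n : ℕ) (h : C16 P (P.X n))
    (hlt : P.cs * |(P.X n).2.2| < 1) : P.Z := by
  rcases hx : P.X n with ⟨a, b, l⟩
  rw [hx] at h hlt
  obtain ⟨hl, ha, hdr, ⟨d2, hb, hne⟩, hds⟩ := h
  simp only at hl ha hdr hds hlt
  subst ha; subst hb
  have hdnr := dne P.hcr hl
  have hdns := dne P.hcs hl
  have har := algo1_finish_le hdnr hdr (sdir P.er l)
  obtain ⟨m, hnm, hXm, hsm⟩ := until_act P true n (by rw [hx]; exact keep_r P _ _ l har)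
  rw [hx] at hXm
  have has : algo1 (St.s2 d2) (P.cs * |l|) (sdir P.es l) = (.s3, 1/2) :=
    algo1_s2_mid hdns (Ne.symm hne) (by linarith) hlt
  have heq : (1 - 1/2 : ℝ) * l = 1/2 * l := by ring
  have heq2 : (1 - 0 - 1/2 : ℝ) * l = 1/2 * l := by ring
  apply lemC12 P (m+1)
  cases hF : P.sched m false
  · have hnew := step_s P m _ _ l hXm har has hF hsm
    rw [heq] at hnew
    rw [hnew]
    exact ⟨mul_ne_zero (by norm_num) hl, rfl, by rw [d_half]; linarith, rfl,
      by rw [d_half]; linarith⟩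
  · have hnew := step_both P m _ _ l hXm har has hF hsm
    rw [show (1 - 0 - 1/2 : ℝ) * l = 1/2 * l by ring] at hnew
    rw [hnew]
    exact ⟨mul_ne_zero (by norm_num) hl, rfl, by rw [d_half]; linarith, rfl,
      by rw [d_half]; linarith⟩

theorem lemC16aux : ∀ (k : ℕ) (P : Par) (n : ℕ), C16 P (P.X n) →
    P.cs * |(P.X n).2.2| < 2^k → P.Z := by
  intro k
  induction k with
  | zero =>
    intro P n h hk
    exact lemC16_exit P n h (by simpa using hk)
  | succ k ih =>
    intro P n h hk
    by_cases hlt : P.cs * |(P.X n).2.2| < 1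
    · exact lemC16_exit P n h hlt
    · rcases hx : P.X n with ⟨a, b, l⟩
      rw [hx] at h hk hlt
      obtain ⟨hl, ha, hdr, ⟨d2, hb, hne⟩, hds⟩ := h
      simp only at hl ha hdr hds hk hlt
      subst ha; subst hb
      have hdnr := dne P.hcr hl
      have hdns := dne P.hcs hl
      have har := algo1_finish_le hdnr hdr (sdir P.er l)
      obtain ⟨m, hnm, hXm, hsm⟩ := until_act P true n (by rw [hx]; exact keep_r P _ _ l har)
      rw [hx] at hXm
      have has : algo1 (St.s2 d2) (P.cs * |l|) (sdir P.es l) = (.s2 d2, 1/2) :=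
        algo1_s2_ge hdns (Ne.symm hne) hlt
      have hC : C16 P (P.X (m+1)) ∧ P.cs * |(P.X (m+1)).2.2| < 2^k := by
        have hb2 : P.cs * |1/2 * l| < 2^k := by
          rw [d_half]
          rw [pow_succ] at hk
          linarith
        have hcomp : C16 P (St.finish, St.s2 d2, 1/2 * l) := by
          refine ⟨mul_ne_zero (by norm_num) hl, rfl, by rw [d_half]; linarith,
            ⟨d2, rfl, ?_⟩, by rw [d_half]; linarith⟩
          rwa [sdir_mul_pos _ (by norm_num : (0:ℝ) < 1/2)]
        cases hF : P.sched m false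
        · have hnew := step_s P m _ _ l hXm har has hF hsm
          rw [show (1 - 1/2 : ℝ) * l = 1/2 * l by ring] at hnew
          rw [hnew]
          exact ⟨hcomp, hb2⟩
        · have hnew := step_both P m _ _ l hXm har has hF hsm
          rw [show (1 - 0 - 1/2 : ℝ) * l = 1/2 * l by ring] at hnew
          rw [hnew]
          exact ⟨hcomp, hb2⟩
      exact ih P (m+1) hC.1 hC.2

theorem lemC16' (P : Par) (n : ℕ) (h : C16 P (P.X n)) : P.Z := by
  obtain ⟨k, hk⟩ := pow_unbounded_of_one_lt (P.cs * |(P.X n).2.2|) (one_lt_two (α := ℝ))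
  exact lemC16aux k P n h hk

theorem lemC13aux : ∀ (k : ℕ) (P : Par) (n : ℕ), C13 P (P.X n) →
    P.cs * |(P.X n).2.2| < 2^k → P.Z := by
  intro k
  induction k with
  | zero =>
    -- impossible to halve : d_s < 1 always, handled by the general body anyway
    intro P n h hk
    rcases hx : P.X n with ⟨a, b, l⟩
    rw [hx] at h hk
    obtain ⟨hl, ha, hdr, ⟨d2, hb, hne⟩, hds⟩ := h
    simp only at hl ha hdr hds hk
    subst ha; subst hb
    have hdnr := dne P.hcr hl
    have hdns := dne P.hcs hl
    have har : algo1 St.s3 (P.cr * |l|) (sdir P.er l) = (.finish, 0) :=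
      algo1_s3_lt hdnr (by linarith) _
    have has : algo1 (St.s2 d2) (P.cs * |l|) (sdir P.es l) = (.s3, 1/2) :=
      algo1_s2_mid hdns (Ne.symm hne) (by linarith) (by simpa using hk)
    rcases P.hf.1 n with hF | hT
    · cases hT : P.sched n true
      · -- only r : C16
        have hnew := step_r P n _ _ l hx har has hF hT
        rw [show (1 - 0 : ℝ) * l = l by ring] at hnew
        apply lemC16' P (n+1)
        rw [hnew]
        exact ⟨hl, rfl, by linarith, ⟨d2, rfl, hne⟩, hds⟩
      · -- both : C12
        have hnew := step_both P n _ _ l hx har has hF hT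
        rw [show (1 - 0 - 1/2 : ℝ) * l = 1/2 * l by ring] at hnew
        apply lemC12 P (n+1)
        rw [hnew]
        exact ⟨mul_ne_zero (by norm_num) hl, rfl, by rw [d_half]; linarith, rfl,
          by rw [d_half]; linarith⟩
    · cases hF : P.sched n false
      · -- only s : C14
        have hnew := step_s P n _ _ l hx har has hF hT
        rw [show (1 - 1/2 : ℝ) * l = 1/2 * l by ring] at hnew
        apply lemC14 P (n+1)
        rw [hnew]
        exact ⟨mul_ne_zero (by norm_num) hl, rfl, by rw [d_half]; linarith, rfl,
          by rw [d_half]; linarith⟩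
      · have hnew := step_both P n _ _ l hx har has hF hT
        rw [show (1 - 0 - 1/2 : ℝ) * l = 1/2 * l by ring] at hnew
        apply lemC12 P (n+1)
        rw [hnew]
        exact ⟨mul_ne_zero (by norm_num) hl, rfl, by rw [d_half]; linarith, rfl,
          by rw [d_half]; linarith⟩
  | succ k ih =>
    intro P n h hk
    rcases hx : P.X n with ⟨a, b, l⟩
    rw [hx] at h hk
    obtain ⟨hl, ha, hdr, ⟨d2, hb, hne⟩, hds⟩ := h
    simp only at hl ha hdr hds hk
    subst ha; subst hb
    have hdnr := dne P.hcr hl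
    have hdns := dne P.hcs hl
    have har : algo1 St.s3 (P.cr * |l|) (sdir P.er l) = (.finish, 0) :=
      algo1_s3_lt hdnr (by linarith) _
    by_cases hlt : P.cs * |l| < 1
    · -- same as base case : s moves to s3 when acting
      have has : algo1 (St.s2 d2) (P.cs * |l|) (sdir P.es l) = (.s3, 1/2) :=
        algo1_s2_mid hdns (Ne.symm hne) (by linarith) hlt
      rcases P.hf.1 n with hF | hT
      · cases hT : P.sched n true
        · have hnew := step_r P n _ _ l hx har has hF hT
          rw [show (1 - 0 : ℝ) * l = l by ring] at hnew
          apply lemC16' P (n+1)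
          rw [hnew]
          exact ⟨hl, rfl, by linarith, ⟨d2, rfl, hne⟩, hds⟩
        · have hnew := step_both P n _ _ l hx har has hF hT
          rw [show (1 - 0 - 1/2 : ℝ) * l = 1/2 * l by ring] at hnew
          apply lemC12 P (n+1)
          rw [hnew]
          exact ⟨mul_ne_zero (by norm_num) hl, rfl, by rw [d_half]; linarith, rfl,
            by rw [d_half]; linarith⟩
      · cases hF : P.sched n false
        · have hnew := step_s P n _ _ l hx har has hF hT
          rw [show (1 - 1/2 : ℝ) * l = 1/2 * l by ring] at hnew
          apply lemC14 P (n+1)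
          rw [hnew]
          exact ⟨mul_ne_zero (by norm_num) hl, rfl, by rw [d_half]; linarith, rfl,
            by rw [d_half]; linarith⟩
        · have hnew := step_both P n _ _ l hx har has hF hT
          rw [show (1 - 0 - 1/2 : ℝ) * l = 1/2 * l by ring] at hnew
          apply lemC12 P (n+1)
          rw [hnew]
          exact ⟨mul_ne_zero (by norm_num) hl, rfl, by rw [d_half]; linarith, rfl,
            by rw [d_half]; linarith⟩
    · -- d_s ≥ 1 : s stays in s2 when acting
      have has : algo1 (St.s2 d2) (P.cs * |l|) (sdir P.es l) = (.s2 d2, 1/2) :=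
        algo1_s2_ge hdns (Ne.symm hne) hlt
      have hb2 : P.cs * |1/2 * l| < 2^k := by
        rw [d_half]
        rw [pow_succ] at hk
        linarith
      rcases P.hf.1 n with hF | hT
      · cases hT : P.sched n true
        · have hnew := step_r P n _ _ l hx har has hF hT
          rw [show (1 - 0 : ℝ) * l = l by ring] at hnew
          apply lemC16' P (n+1)
          rw [hnew]
          exact ⟨hl, rfl, by linarith, ⟨d2, rfl, hne⟩, hds⟩
        · -- both : r finishes, s halves : C16
          have hnew := step_both P n _ _ l hx har has hF hT
          rw [show (1 - 0 - 1/2 : ℝ) * l = 1/2 * l by ring] at hnew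
          apply lemC16' P (n+1)
          rw [hnew]
          refine ⟨mul_ne_zero (by norm_num) hl, rfl, by rw [d_half]; linarith,
            ⟨d2, rfl, ?_⟩, by rw [d_half]; linarith⟩
          rwa [sdir_mul_pos _ (by norm_num : (0:ℝ) < 1/2)]
      · cases hF : P.sched n false
        · -- only s : stays C13
          have hnew := step_s P n _ _ l hx har has hF hT
          rw [show (1 - 1/2 : ℝ) * l = 1/2 * l by ring] at hnew
          apply ih P (n+1)
          · rw [hnew]
            refine ⟨mul_ne_zero (by norm_num) hl, rfl, by rw [d_half]; linarith,
              ⟨d2, rfl, ?_⟩, by rw [d_half]; linarith⟩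
            rwa [sdir_mul_pos _ (by norm_num : (0:ℝ) < 1/2)]
          · rw [hnew]
            exact hb2
        · have hnew := step_both P n _ _ l hx har has hF hT
          rw [show (1 - 0 - 1/2 : ℝ) * l = 1/2 * l by ring] at hnew
          apply lemC16' P (n+1)
          rw [hnew]
          refine ⟨mul_ne_zero (by norm_num) hl, rfl, by rw [d_half]; linarith,
            ⟨d2, rfl, ?_⟩, by rw [d_half]; linarith⟩
          rwa [sdir_mul_pos _ (by norm_num : (0:ℝ) < 1/2)]

theorem lemC13' (P : Par) (n : ℕ) (h : C13 P (P.X n)) : P.Z := by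
  obtain ⟨k, hk⟩ := pow_unbounded_of_one_lt (P.cs * |(P.X n).2.2|) (one_lt_two (α := ℝ))
  exact lemC13aux k P n h hk

theorem lemC11' (P : Par) (n : ℕ) (h : C11 P (P.X n)) : P.Z := by
  rcases hx : P.X n with ⟨a, b, l⟩
  rw [hx] at h
  obtain ⟨hl, ha, hdr1, hdr2, ⟨d2, hb, hne⟩⟩ := h
  simp only at hl ha hdr1 hdr2
  subst ha; subst hb
  have hdnr := dne P.hcr hl
  have hdns := dne P.hcs hl
  have har : algo1 St.s3 (P.cr * |l|) (sdir P.er l) = (.finish, 1) :=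
    algo1_s3_ge hdnr (by linarith) _
  rcases P.hf.1 n with hF | hT
  · cases hT : P.sched n true
    · -- only r : rendezvous
      refine ⟨n+1, ?_⟩
      rcases lt_trichotomy (P.cs * |l|) (1/2) with hc | hc | hc
      · rw [step_r P n _ _ l hx har (algo1_s2_lt_half hdns (Ne.symm hne) hc) hF hT]; norm_num
      · rw [step_r P n _ _ l hx har
          (algo1_s2_mid hdns (Ne.symm hne) (by linarith) (by linarith)) hF hT]; norm_num
      · by_cases hc1 : P.cs * |l| < 1
        · rw [step_r P n _ _ l hx har
            (algo1_s2_mid hdns (Ne.symm hne) (by linarith) hc1) hF hT]; norm_num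
        · rw [step_r P n _ _ l hx har (algo1_s2_ge hdns (Ne.symm hne) hc1) hF hT]; norm_num
    · -- both
      rcases lt_trichotomy (P.cs * |l|) (1/2) with hc | hc | hc
      · refine ⟨n+1, ?_⟩
        rw [step_both P n _ _ l hx har (algo1_s2_lt_half hdns (Ne.symm hne) hc) hF hT]
        norm_num
      · -- d_s = 1/2 : s to s3, l' = -l/2 : C12
        have hnew := step_both P n _ _ l hx har
          (algo1_s2_mid hdns (Ne.symm hne) (by linarith) (by linarith)) hF hT
        rw [show (1 - 1 - 1/2 : ℝ) * l = (-(1/2)) * l by ring] at hnew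
        apply lemC12 P (n+1)
        rw [hnew]
        exact ⟨mul_ne_zero (by norm_num) hl, rfl, by rw [d_neg_half]; linarith, rfl,
          by rw [d_neg_half]; linarith⟩
      · by_cases hc1 : P.cs * |l| < 1
        · have hnew := step_both P n _ _ l hx har
            (algo1_s2_mid hdns (Ne.symm hne) (by linarith) hc1) hF hT
          rw [show (1 - 1 - 1/2 : ℝ) * l = (-(1/2)) * l by ring] at hnew
          apply lemC12 P (n+1)
          rw [hnew]
          exact ⟨mul_ne_zero (by norm_num) hl, rfl, by rw [d_neg_half]; linarith, rfl,
            by rw [d_neg_half]; linarith⟩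
        · -- d_s ≥ 1 : s stays s2 but sign flips : C10
          have hnew := step_both P n _ _ l hx har (algo1_s2_ge hdns (Ne.symm hne) hc1) hF hT
          rw [show (1 - 1 - 1/2 : ℝ) * l = (-(1/2)) * l by ring] at hnew
          apply lemC10 P (n+1)
          rw [hnew]
          exact ⟨mul_ne_zero (by norm_num) hl, rfl, by rw [d_neg_half]; linarith,
            ne2_neg_half hl ⟨d2, rfl, hne⟩⟩
  · cases hF : P.sched n false
    · -- only s
      rcases lt_trichotomy (P.cs * |l|) (1/2) with hc | hc | hc
      · -- s stops : C15
        have hnew := step_s P n _ _ l hx har (algo1_s2_lt_half hdns (Ne.symm hne) hc) hF hT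
        rw [show (1 - 0 : ℝ) * l = l by ring] at hnew
        apply lemC15 P (n+1)
        rw [hnew]
        exact ⟨hl, rfl, hdr1, rfl, by linarith⟩
      · have hnew := step_s P n _ _ l hx har
          (algo1_s2_mid hdns (Ne.symm hne) (by linarith) (by linarith)) hF hT
        rw [show (1 - 1/2 : ℝ) * l = 1/2 * l by ring] at hnew
        apply lemC14 P (n+1)
        rw [hnew]
        exact ⟨mul_ne_zero (by norm_num) hl, rfl, by rw [d_half]; linarith, rfl,
          by rw [d_half]; linarith⟩
      · by_cases hc1 : P.cs * |l| < 1
        · have hnew := step_s P n _ _ l hx har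
            (algo1_s2_mid hdns (Ne.symm hne) (by linarith) hc1) hF hT
          rw [show (1 - 1/2 : ℝ) * l = 1/2 * l by ring] at hnew
          apply lemC14 P (n+1)
          rw [hnew]
          exact ⟨mul_ne_zero (by norm_num) hl, rfl, by rw [d_half]; linarith, rfl,
            by rw [d_half]; linarith⟩
        · -- s halves, stays s2 : C13
          have hnew := step_s P n _ _ l hx har (algo1_s2_ge hdns (Ne.symm hne) hc1) hF hT
          rw [show (1 - 1/2 : ℝ) * l = 1/2 * l by ring] at hnew
          apply lemC13' P (n+1)
          rw [hnew]
          refine ⟨mul_ne_zero (by norm_num) hl, rfl, by rw [d_half]; linarith,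
            ⟨d2, rfl, ?_⟩, by rw [d_half]; linarith⟩
          rwa [sdir_mul_pos _ (by norm_num : (0:ℝ) < 1/2)]
    · -- both
      rcases lt_trichotomy (P.cs * |l|) (1/2) with hc | hc | hc
      · refine ⟨n+1, ?_⟩
        rw [step_both P n _ _ l hx har (algo1_s2_lt_half hdns (Ne.symm hne) hc) hF hT]
        norm_num
      · -- d_s = 1/2 : s to s3, l' = -l/2 : C12
        have hnew := step_both P n _ _ l hx har
          (algo1_s2_mid hdns (Ne.symm hne) (by linarith) (by linarith)) hF hT
        rw [show (1 - 1 - 1/2 : ℝ) * l = (-(1/2)) * l by ring] at hnew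
        apply lemC12 P (n+1)
        rw [hnew]
        exact ⟨mul_ne_zero (by norm_num) hl, rfl, by rw [d_neg_half]; linarith, rfl,
          by rw [d_neg_half]; linarith⟩
      · by_cases hc1 : P.cs * |l| < 1
        · have hnew := step_both P n _ _ l hx har
            (algo1_s2_mid hdns (Ne.symm hne) (by linarith) hc1) hF hT
          rw [show (1 - 1 - 1/2 : ℝ) * l = (-(1/2)) * l by ring] at hnew
          apply lemC12 P (n+1)
          rw [hnew]
          exact ⟨mul_ne_zero (by norm_num) hl, rfl, by rw [d_neg_half]; linarith, rfl,
            by rw [d_neg_half]; linarith⟩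
        · -- d_s ≥ 1 : s stays s2 but sign flips : C10
          have hnew := step_both P n _ _ l hx har (algo1_s2_ge hdns (Ne.symm hne) hc1) hF hT
          rw [show (1 - 1 - 1/2 : ℝ) * l = (-(1/2)) * l by ring] at hnew
          apply lemC10 P (n+1)
          rw [hnew]
          exact ⟨mul_ne_zero (by norm_num) hl, rfl, by rw [d_neg_half]; linarith,
            ne2_neg_half hl ⟨d2, rfl, hne⟩⟩

end RVaux
namespace RVaux

lemma step_r' (P : Par) (m : ℕ) (a b : St) (l : ℝ) (hx : P.X m = (a, b, l))
    {a' : St} {mr : ℝ}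
    (har : algo1 a (P.cr * |l|) (sdir P.er l) = (a', mr))
    (hF : P.sched m false = true) (hT : P.sched m true = false) :
    P.X (m+1) = (a', b, (1 - mr) * l) := by
  rw [P.X_succ, hx]
  simp only [sstep, har, hF, hT]
  norm_num

lemma step_s' (P : Par) (m : ℕ) (a b : St) (l : ℝ) (hx : P.X m = (a, b, l))
    {b' : St} {ms : ℝ}
    (has : algo1 b (P.cs * |l|) (sdir P.es l) = (b', ms))
    (hF : P.sched m false = false) (hT : P.sched m true = true) :
    P.X (m+1) = (a, b', (1 - ms) * l) := by
  rw [P.X_succ, hx]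
  simp only [sstep, has, hF, hT]
  norm_num

lemma algo1_s2_half {d : ℝ} {dir d' : Dir} (h0 : d ≠ 0) (hne : dir ≠ d')
    (h : ¬ d < 1/2) : ∃ s', algo1 (.s2 d') d dir = (s', 1/2) := by
  by_cases h1 : d < 1
  · exact ⟨.s3, algo1_s2_mid h0 hne h h1⟩
  · exact ⟨.s2 d', algo1_s2_ge h0 hne h1⟩

/-! ### Mirroring -/

lemma mirror {C : Par → SC → Prop} (hlem : ∀ P n, C P (P.X n) → P.Z)
    (P : Par) (n : ℕ) (h : C P.swap (Sw (P.X n))) : P.Z :=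
  P.swap_Z (hlem P.swap n (by rw [P.swap_X]; exact h))

lemma ne2_swap {e : Dir} {l : ℝ} {s : St} (hl : l ≠ 0) (h : ne2 e l s) :
    ne2 (dflip e) (-l) s := by
  obtain ⟨d, hd, hne⟩ := h
  exact ⟨d, hd, by rwa [sdir_dflip_neg _ hl]⟩

lemma eq2_swap {e : Dir} {l : ℝ} {s : St} (hl : l ≠ 0) (h : eq2 e l s) :
    eq2 (dflip e) (-l) s := by
  unfold eq2 at *
  rwa [sdir_dflip_neg _ hl]

def C4m (P : Par) (x : SC) : Prop := x.2.2 ≠ 0 ∧ x.2.1 = .finish ∧ P.cs * |x.2.2| ≤ 1 ∧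
  x.1 = .s1 ∧ 1 < P.cr * |x.2.2|
def C5m (P : Par) (x : SC) : Prop := x.2.2 ≠ 0 ∧ x.2.1 = .s1 ∧ P.cs * |x.2.2| = 1 ∧
  x.1 = .start
def C9m (P : Par) (x : SC) : Prop := x.2.2 ≠ 0 ∧ x.2.1 = .s1 ∧ P.cs * |x.2.2| ≤ 1 ∧
  eq2 P.er x.2.2 x.1
def C11m (P : Par) (x : SC) : Prop := x.2.2 ≠ 0 ∧ x.2.1 = .s3 ∧ 1/4 ≤ P.cs * |x.2.2| ∧
  P.cs * |x.2.2| < 1/2 ∧ ne2 P.er x.2.2 x.1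
def C12m (P : Par) (x : SC) : Prop := x.2.2 ≠ 0 ∧ x.2.1 = .finish ∧ P.cs * |x.2.2| ≤ 1 ∧
  x.1 = .s3 ∧ 1/4 ≤ P.cr * |x.2.2|
def C16m (P : Par) (x : SC) : Prop := x.2.2 ≠ 0 ∧ x.2.1 = .finish ∧ P.cs * |x.2.2| ≤ 1 ∧
  ne2 P.er x.2.2 x.1 ∧ 1/2 ≤ P.cr * |x.2.2|

theorem lemC4m (P : Par) (n : ℕ) (h : C4m P (P.X n)) : P.Z := by
  refine mirror lemC4 P n ?_
  obtain ⟨hl, hb, hds, ha, hdr⟩ := h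
  refine ⟨?_, hb, ?_, ha, ?_⟩
  · show -(P.X n).2.2 ≠ 0; simpa using hl
  · show P.cs * |-(P.X n).2.2| ≤ 1; rwa [abs_neg]
  · show 1 < P.cr * |-(P.X n).2.2|; rwa [abs_neg]

theorem lemC12m (P : Par) (n : ℕ) (h : C12m P (P.X n)) : P.Z := by
  refine mirror lemC12 P n ?_
  obtain ⟨hl, hb, hds, ha, hdr⟩ := h
  refine ⟨?_, hb, ?_, ha, ?_⟩
  · show -(P.X n).2.2 ≠ 0; simpa using hl
  · show P.cs * |-(P.X n).2.2| ≤ 1; rwa [abs_neg]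
  · show 1/4 ≤ P.cr * |-(P.X n).2.2|; rwa [abs_neg]

theorem lemC16m (P : Par) (n : ℕ) (h : C16m P (P.X n)) : P.Z := by
  refine mirror lemC16' P n ?_
  obtain ⟨hl, hb, hds, hne, hdr⟩ := h
  refine ⟨?_, hb, ?_, ne2_swap hl hne, ?_⟩
  · show -(P.X n).2.2 ≠ 0; simpa using hl
  · show P.cs * |-(P.X n).2.2| ≤ 1; rwa [abs_neg]
  · show 1/2 ≤ P.cr * |-(P.X n).2.2|; rwa [abs_neg]

theorem lemC11m (P : Par) (n : ℕ) (h : C11m P (P.X n)) : P.Z := by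
  refine mirror lemC11' P n ?_
  obtain ⟨hl, hb, hds1, hds2, hne⟩ := h
  refine ⟨?_, hb, ?_, ?_, ne2_swap hl hne⟩
  · show -(P.X n).2.2 ≠ 0; simpa using hl
  · show 1/4 ≤ P.cs * |-(P.X n).2.2|; rwa [abs_neg]
  · show P.cs * |-(P.X n).2.2| < 1/2; rwa [abs_neg]

/-! ### The main loop class C2 -/

theorem lemC2aux : ∀ (k : ℕ) (P : Par) (n : ℕ), C2 P (P.X n) →
    P.cr * |(P.X n).2.2| < 2^k → P.cs * |(P.X n).2.2| < 2^k → P.Z := by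
  intro k
  induction k using Nat.strong_induction_on with
  | _ k ih =>
  intro P n h hbr hbs
  rcases hx : P.X n with ⟨a, b, l⟩
  rw [hx] at h hbr hbs
  obtain ⟨hl, ⟨d1, ha, hne1⟩, ⟨d2, hb, hne2⟩, hinv⟩ := h
  simp only at hl hbr hbs hinv
  subst ha; subst hb
  have hdnr := dne P.hcr hl
  have hdns := dne P.hcs hl
  have hl2 : (1:ℝ)/2 * l ≠ 0 := mul_ne_zero (by norm_num) hl
  cases hF : P.sched n false <;> cases hT : P.sched n true
  · exact absurd (P.hf.1 n) (by simp [hF, hT])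
  · -- only s
    by_cases h1 : P.cs * |l| < 1/2
    · have hdr2 : 1/2 ≤ P.cr * |l| := hinv.resolve_right (by linarith)
      have hnew := step_s' P n _ _ l hx (algo1_s2_lt_half hdns (Ne.symm hne2) h1) hF hT
      rw [show (1 - 0 : ℝ) * l = l by ring] at hnew
      apply lemC16m P (n+1)
      rw [hnew]
      exact ⟨hl, rfl, by linarith, ⟨d1, rfl, hne1⟩, hdr2⟩
    · by_cases h2 : P.cs * |l| < 1
      · have hnew := step_s' P n _ _ l hx
          (algo1_s2_mid hdns (Ne.symm hne2) h1 h2) hF hT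
        rw [show (1 - 1/2 : ℝ) * l = 1/2 * l by ring] at hnew
        apply lemC11m P (n+1)
        rw [hnew]
        refine ⟨hl2, rfl, by rw [d_half]; linarith, by rw [d_half]; linarith,
          ⟨d1, rfl, ?_⟩⟩
        rwa [sdir_mul_pos _ (by norm_num : (0:ℝ) < 1/2)]
      · -- s halves, recurse
        obtain ⟨k', rfl⟩ : ∃ k', k = k' + 1 := by
          refine ⟨k - 1, ?_⟩
          have : k ≠ 0 := by
            rintro rfl
            rw [pow_zero] at hbs
            linarith
          omega
        have hnew := step_s' P n _ _ l hx (algo1_s2_ge hdns (Ne.symm hne2) h2) hF hT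
        rw [show (1 - 1/2 : ℝ) * l = 1/2 * l by ring] at hnew
        apply ih k' (by omega) P (n+1)
        · rw [hnew]
          refine ⟨hl2, ⟨d1, rfl, ?_⟩, ⟨d2, rfl, ?_⟩, Or.inr (by rw [d_half]; linarith)⟩ <;>
            rwa [sdir_mul_pos _ (by norm_num : (0:ℝ) < 1/2)]
        · rw [hnew]
          simp only
          rw [d_half, pow_succ] at *
          linarith [pow_pos (by norm_num : (0:ℝ) < 2) k']
        · rw [hnew]
          simp only
          rw [d_half] at *
          rw [pow_succ] at hbs
          linarith
  · -- only r
    by_cases h1 : P.cr * |l| < 1/2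
    · have hds2 : 1/2 ≤ P.cs * |l| := hinv.resolve_left (by linarith)
      have hnew := step_r' P n _ _ l hx (algo1_s2_lt_half hdnr (Ne.symm hne1) h1) hF hT
      rw [show (1 - 0 : ℝ) * l = l by ring] at hnew
      apply lemC16' P (n+1)
      rw [hnew]
      exact ⟨hl, rfl, by linarith, ⟨d2, rfl, hne2⟩, hds2⟩
    · by_cases h2 : P.cr * |l| < 1
      · have hnew := step_r' P n _ _ l hx
          (algo1_s2_mid hdnr (Ne.symm hne1) h1 h2) hF hT
        rw [show (1 - 1/2 : ℝ) * l = 1/2 * l by ring] at hnew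
        apply lemC11' P (n+1)
        rw [hnew]
        refine ⟨hl2, rfl, by rw [d_half]; linarith, by rw [d_half]; linarith,
          ⟨d2, rfl, ?_⟩⟩
        rwa [sdir_mul_pos _ (by norm_num : (0:ℝ) < 1/2)]
      · obtain ⟨k', rfl⟩ : ∃ k', k = k' + 1 := by
          refine ⟨k - 1, ?_⟩
          have : k ≠ 0 := by
            rintro rfl
            rw [pow_zero] at hbr
            linarith
          omega
        have hnew := step_r' P n _ _ l hx (algo1_s2_ge hdnr (Ne.symm hne1) h2) hF hT
        rw [show (1 - 1/2 : ℝ) * l = 1/2 * l by ring] at hnew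
        apply ih k' (by omega) P (n+1)
        · rw [hnew]
          refine ⟨hl2, ⟨d1, rfl, ?_⟩, ⟨d2, rfl, ?_⟩, Or.inl (by rw [d_half]; linarith)⟩ <;>
            rwa [sdir_mul_pos _ (by norm_num : (0:ℝ) < 1/2)]
        · rw [hnew]
          simp only
          rw [d_half] at *
          rw [pow_succ] at hbr
          linarith
        · rw [hnew]
          simp only
          rw [d_half, pow_succ] at *
          linarith [pow_pos (by norm_num : (0:ℝ) < 2) k']
  · -- both
    by_cases h1 : P.cr * |l| < 1/2
    · have hds2 : 1/2 ≤ P.cs * |l| := hinv.resolve_left (by linarith)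
      have har := algo1_s2_lt_half hdnr (Ne.symm hne1) h1
      by_cases h2 : P.cs * |l| < 1
      · have hnew := step_both P n _ _ l hx har
          (algo1_s2_mid hdns (Ne.symm hne2) (by linarith) h2) hF hT
        rw [show (1 - 0 - 1/2 : ℝ) * l = 1/2 * l by ring] at hnew
        apply lemC12 P (n+1)
        rw [hnew]
        exact ⟨hl2, rfl, by rw [d_half]; linarith, rfl, by rw [d_half]; linarith⟩
      · have hnew := step_both P n _ _ l hx har
          (algo1_s2_ge hdns (Ne.symm hne2) h2) hF hT
        rw [show (1 - 0 - 1/2 : ℝ) * l = 1/2 * l by ring] at hnew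
        apply lemC16' P (n+1)
        rw [hnew]
        refine ⟨hl2, rfl, by rw [d_half]; linarith, ⟨d2, rfl, ?_⟩,
          by rw [d_half]; linarith⟩
        rwa [sdir_mul_pos _ (by norm_num : (0:ℝ) < 1/2)]
    · by_cases h3 : P.cs * |l| < 1/2
      · have has := algo1_s2_lt_half hdns (Ne.symm hne2) h3
        by_cases h2 : P.cr * |l| < 1
        · have hnew := step_both P n _ _ l hx
            (algo1_s2_mid hdnr (Ne.symm hne1) h1 h2) has hF hT
          rw [show (1 - 1/2 - 0 : ℝ) * l = 1/2 * l by ring] at hnew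
          apply lemC12m P (n+1)
          rw [hnew]
          exact ⟨hl2, rfl, by rw [d_half]; linarith, rfl, by rw [d_half]; linarith⟩
        · have hnew := step_both P n _ _ l hx
            (algo1_s2_ge hdnr (Ne.symm hne1) h2) has hF hT
          rw [show (1 - 1/2 - 0 : ℝ) * l = 1/2 * l by ring] at hnew
          apply lemC16m P (n+1)
          rw [hnew]
          refine ⟨hl2, rfl, by rw [d_half]; linarith, ⟨d1, rfl, ?_⟩,
            by rw [d_half]; linarith⟩
          rwa [sdir_mul_pos _ (by norm_num : (0:ℝ) < 1/2)]
      · obtain ⟨sa, hsa⟩ := algo1_s2_half hdnr (Ne.symm hne1) h1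
        obtain ⟨sb, hsb⟩ := algo1_s2_half hdns (Ne.symm hne2) h3
        refine ⟨n+1, ?_⟩
        rw [step_both P n _ _ l hx hsa hsb hF hT]
        norm_num

theorem lemC2' (P : Par) (n : ℕ) (h : C2 P (P.X n)) : P.Z := by
  obtain ⟨k1, hk1⟩ := pow_unbounded_of_one_lt (P.cr * |(P.X n).2.2|) (one_lt_two (α := ℝ))
  obtain ⟨k2, hk2⟩ := pow_unbounded_of_one_lt (P.cs * |(P.X n).2.2|) (one_lt_two (α := ℝ))
  refine lemC2aux (max k1 k2) P n h ?_ ?_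
  · exact hk1.trans_le (by gcongr <;> [norm_num; exact le_max_left _ _])
  · exact hk2.trans_le (by gcongr <;> [norm_num; exact le_max_right _ _])

end RVaux
namespace RVaux

theorem lemC9 (P : Par) (n : ℕ) (h : C9 P (P.X n)) : P.Z := by
  rcases hx : P.X n with ⟨a, b, l⟩
  rw [hx] at h
  obtain ⟨hl, ha, hdr, hb⟩ := h
  simp only at hl ha hdr
  unfold eq2 at hb
  simp only at hb
  subst ha; subst hb
  have hdnr := dne P.hcr hl
  have hdns := dne P.hcs hl
  have har := algo1_s1_le hdnr hdr (sdir P.er l)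
  have has := algo1_s2_eq hdns (sdir P.es l)
  cases hF : P.sched n false <;> cases hT : P.sched n true
  · exact absurd (P.hf.1 n) (by simp [hF, hT])
  · refine ⟨n+1, ?_⟩
    rw [step_s' P n _ _ l hx has hF hT]
    norm_num
  · have hnew := step_r' P n _ _ l hx har hF hT
    rw [show (1 - 0 : ℝ) * l = l by ring] at hnew
    apply lemC10 P (n+1)
    rw [hnew]
    exact ⟨hl, rfl, hdr, rfl⟩
  · refine ⟨n+1, ?_⟩
    rw [step_both P n _ _ l hx har has hF hT]
    norm_num

theorem lemC9m (P : Par) (n : ℕ) (h : C9m P (P.X n)) : P.Z := by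
  refine mirror lemC9 P n ?_
  obtain ⟨hl, hb, hds, heq⟩ := h
  refine ⟨?_, hb, ?_, eq2_swap hl heq⟩
  · show -(P.X n).2.2 ≠ 0; simpa using hl
  · show P.cs * |-(P.X n).2.2| ≤ 1; rwa [abs_neg]

theorem lemC7 (P : Par) (n : ℕ) (h : C7 P (P.X n)) : P.Z := by
  rcases hx : P.X n with ⟨a, b, l⟩
  rw [hx] at h
  obtain ⟨hl, ha, hdr, hb, hds⟩ := h
  simp only at hl ha hdr hb hds
  subst ha; subst hb
  have hdnr := dne P.hcr hl
  have hdns := dne P.hcs hl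
  have har := algo1_finish_gt hdnr (not_le.2 hdr) (sdir P.er l)
  have has := algo1_s1_le hdns hds (sdir P.es l)
  cases hF : P.sched n false <;> cases hT : P.sched n true
  · exact absurd (P.hf.1 n) (by simp [hF, hT])
  · have hnew := step_s' P n _ _ l hx has hF hT
    rw [show (1 - 0 : ℝ) * l = l by ring] at hnew
    apply lemC8 P (n+1)
    rw [hnew]
    exact ⟨hl, rfl, hdr, rfl, hds⟩
  · refine ⟨n+1, ?_⟩
    rw [step_r' P n _ _ l hx har hF hT]
    norm_num
  · refine ⟨n+1, ?_⟩
    rw [step_both P n _ _ l hx har has hF hT]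
    norm_num

theorem lemC6 (P : Par) (n : ℕ) (h : C6 P (P.X n)) : P.Z := by
  rcases hx : P.X n with ⟨a, b, l⟩
  rw [hx] at h
  obtain ⟨hl, ha, hdr, hb⟩ := h
  simp only at hl ha hdr hb
  subst ha; subst hb
  have hdnr := dne P.hcr hl
  have hdns := dne P.hcs hl
  have har := algo1_finish_le hdnr (le_of_eq hdr) (sdir P.er l)
  obtain ⟨m, hnm, hXm, hsm⟩ := until_act P true n (by rw [hx]; exact keep_r P _ _ l har)
  rw [hx] at hXm
  have hDpos : 0 < P.cs * |l| := mul_pos P.hcs (abs_pos.2 hl)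
  by_cases hds : P.cs * |l| < 1
  · have has := algo1_start_lt hdns hds (sdir P.es l)
    have hinv : (0:ℝ) < 1 / (P.cs * |l|) := by positivity
    have e1 : 1 / (P.cs * |l|) * (P.cs * |l|) = 1 := by field_simp [P.hcs.ne']
    have hC7 : C7 P (St.finish, St.s1, 1 / (P.cs * |l|) * l) := by
      refine ⟨mul_ne_zero hinv.ne' hl, rfl, ?_, rfl, ?_⟩
      · rw [newd, abs_of_pos hinv, hdr]
        rw [show  1 / (P.cs * |l|) * 1 = 1 / (P.cs * |l|) by ring]
        exact one_lt_one_div hDpos hds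
      · rw [newd, abs_of_pos hinv, e1]
    apply lemC7 P (m+1)
    cases hF : P.sched m false
    · have hnew := step_s' P m _ _ l hXm has hF hsm
      rw [show (1 - (1 - 1/(P.cs * |l|))) * l = 1 / (P.cs * |l|) * l by ring] at hnew
      rw [hnew]; exact hC7
    · have hnew := step_both P m _ _ l hXm har has hF hsm
      rw [show (1 - 0 - (1 - 1/(P.cs * |l|))) * l = 1 / (P.cs * |l|) * l by ring] at hnew
      rw [hnew]; exact hC7
  · have has := algo1_start_ge hdns hds (sdir P.es l)
    refine ⟨m+1, ?_⟩
    cases hF : P.sched m false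
    · rw [step_s' P m _ _ l hXm has hF hsm]; norm_num
    · rw [step_both P m _ _ l hXm har has hF hsm]; norm_num

theorem lemC3 (P : Par) (n : ℕ) (h : C3 P (P.X n)) : P.Z := by
  rcases hx : P.X n with ⟨a, b, l⟩
  rw [hx] at h
  obtain ⟨hl, ha, hb, hdr, hds, hinv⟩ := h
  simp only at hl ha hb hdr hds hinv
  subst ha; subst hb
  have hdnr := dne P.hcr hl
  have hdns := dne P.hcs hl
  cases hF : P.sched n false <;> cases hT : P.sched n true
  · exact absurd (P.hf.1 n) (by simp [hF, hT])
  · -- only s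
    by_cases h2 : 1 < P.cs * |l|
    · refine ⟨n+1, ?_⟩
      rw [step_s' P n _ _ l hx (algo1_s1_gt hdns (not_le.2 h2) (sdir P.es l)) hF hT]
      norm_num
    · have hd1 : 1 < P.cr * |l| := hinv.resolve_right h2
      have hnew := step_s' P n _ _ l hx (algo1_s1_le hdns (not_lt.1 h2) (sdir P.es l)) hF hT
      rw [show (1 - 0 : ℝ) * l = l by ring] at hnew
      apply lemC4m P (n+1)
      rw [hnew]
      exact ⟨hl, rfl, not_lt.1 h2, rfl, hd1⟩
  · -- only r
    by_cases h2 : 1 < P.cr * |l|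
    · refine ⟨n+1, ?_⟩
      rw [step_r' P n _ _ l hx (algo1_s1_gt hdnr (not_le.2 h2) (sdir P.er l)) hF hT]
      norm_num
    · have hd1 : 1 < P.cs * |l| := hinv.resolve_left h2
      have hnew := step_r' P n _ _ l hx (algo1_s1_le hdnr (not_lt.1 h2) (sdir P.er l)) hF hT
      rw [show (1 - 0 : ℝ) * l = l by ring] at hnew
      apply lemC4 P (n+1)
      rw [hnew]
      exact ⟨hl, rfl, not_lt.1 h2, rfl, hd1⟩
  · -- both
    by_cases h2 : 1 < P.cr * |l| <;> by_cases h3 : 1 < P.cs * |l|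
    · -- both move to the other : swap, C2
      have hnew := step_both P n _ _ l hx (algo1_s1_gt hdnr (not_le.2 h2) (sdir P.er l))
        (algo1_s1_gt hdns (not_le.2 h3) (sdir P.es l)) hF hT
      rw [show (1 - 1 - 1 : ℝ) * l = -l by ring] at hnew
      apply lemC2' P (n+1)
      rw [hnew]
      refine ⟨by simpa using hl, ⟨sdir P.er l, rfl, ?_⟩, ⟨sdir P.es l, rfl, ?_⟩,
        Or.inl (by rw [abs_neg]; linarith)⟩ <;>
        · rw [sdir_neg _ hl]
          exact Ne.symm (dflip_ne _)
    · refine ⟨n+1, ?_⟩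
      rw [step_both P n _ _ l hx (algo1_s1_gt hdnr (not_le.2 h2) (sdir P.er l))
        (algo1_s1_le hdns (not_lt.1 h3) (sdir P.es l)) hF hT]
      norm_num
    · refine ⟨n+1, ?_⟩
      rw [step_both P n _ _ l hx (algo1_s1_le hdnr (not_lt.1 h2) (sdir P.er l))
        (algo1_s1_gt hdns (not_le.2 h3) (sdir P.es l)) hF hT]
      norm_num
    · rcases hinv with h4 | h4 <;> [exact absurd h4 h2; exact absurd h4 h3]

theorem lemC5 (P : Par) (n : ℕ) (h : C5 P (P.X n)) : P.Z := by
  rcases hx : P.X n with ⟨a, b, l⟩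
  rw [hx] at h
  obtain ⟨hl, ha, hdr, hb⟩ := h
  simp only at hl ha hdr hb
  subst ha; subst hb
  have hdnr := dne P.hcr hl
  have hdns := dne P.hcs hl
  have hDpos : 0 < P.cs * |l| := mul_pos P.hcs (abs_pos.2 hl)
  have har := algo1_s1_le hdnr (le_of_eq hdr) (sdir P.er l)
  cases hF : P.sched n false <;> cases hT : P.sched n true
  · exact absurd (P.hf.1 n) (by simp [hF, hT])
  · -- only s
    by_cases hds : P.cs * |l| < 1
    · have hinv : (0:ℝ) < 1 / (P.cs * |l|) := by positivity
      have e1 : 1 / (P.cs * |l|) * (P.cs * |l|) = 1 := by field_simp [P.hcs.ne']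
      have hnew := step_s' P n _ _ l hx (algo1_start_lt hdns hds (sdir P.es l)) hF hT
      rw [show (1 - (1 - 1/(P.cs * |l|))) * l = 1 / (P.cs * |l|) * l by ring] at hnew
      apply lemC3 P (n+1)
      rw [hnew]
      refine ⟨mul_ne_zero hinv.ne' hl, rfl, rfl, ?_, ?_, Or.inl ?_⟩
      · rw [newd, abs_of_pos hinv, hdr]
        rw [show 1 / (P.cs * |l|) * 1 = 1 / (P.cs * |l|) by ring]
        exact (one_lt_one_div hDpos hds).le
      · rw [newd, abs_of_pos hinv, e1]
      · rw [newd, abs_of_pos hinv, hdr]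
        rw [show 1 / (P.cs * |l|) * 1 = 1 / (P.cs * |l|) by ring]
        exact one_lt_one_div hDpos hds
    · refine ⟨n+1, ?_⟩
      rw [step_s' P n _ _ l hx (algo1_start_ge hdns hds (sdir P.es l)) hF hT]
      norm_num
  · -- only r
    have hnew := step_r' P n _ _ l hx har hF hT
    rw [show (1 - 0 : ℝ) * l = l by ring] at hnew
    apply lemC6 P (n+1)
    rw [hnew]
    exact ⟨hl, rfl, hdr, rfl⟩
  · -- both
    by_cases hds : P.cs * |l| < 1
    · have hinv : (0:ℝ) < 1 / (P.cs * |l|) := by positivity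
      have e1 : 1 / (P.cs * |l|) * (P.cs * |l|) = 1 := by field_simp [P.hcs.ne']
      have hnew := step_both P n _ _ l hx har (algo1_start_lt hdns hds (sdir P.es l)) hF hT
      rw [show (1 - 0 - (1 - 1/(P.cs * |l|))) * l = 1 / (P.cs * |l|) * l by ring] at hnew
      apply lemC7 P (n+1)
      rw [hnew]
      refine ⟨mul_ne_zero hinv.ne' hl, rfl, ?_, rfl, ?_⟩
      · rw [newd, abs_of_pos hinv, hdr]
        rw [show 1 / (P.cs * |l|) * 1 = 1 / (P.cs * |l|) by ring]
        exact one_lt_one_div hDpos hds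
      · rw [newd, abs_of_pos hinv, e1]
    · refine ⟨n+1, ?_⟩
      rw [step_both P n _ _ l hx har (algo1_start_ge hdns hds (sdir P.es l)) hF hT]
      norm_num

theorem lemC5m (P : Par) (n : ℕ) (h : C5m P (P.X n)) : P.Z := by
  refine mirror lemC5 P n ?_
  obtain ⟨hl, hb, hds, ha⟩ := h
  refine ⟨?_, hb, ?_, ha⟩
  · show -(P.X n).2.2 ≠ 0; simpa using hl
  · show P.cs * |-(P.X n).2.2| = 1; rwa [abs_neg]

theorem lemC0 (P : Par) (n : ℕ) (h : C0 P (P.X n)) : P.Z := by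
  rcases hx : P.X n with ⟨a, b, l⟩
  rw [hx] at h
  obtain ⟨hl, ha, hb⟩ := h
  simp only at hl ha hb
  subst ha; subst hb
  have hdnr := dne P.hcr hl
  have hdns := dne P.hcs hl
  have hDr : 0 < P.cr * |l| := mul_pos P.hcr (abs_pos.2 hl)
  have hDs : 0 < P.cs * |l| := mul_pos P.hcs (abs_pos.2 hl)
  cases hF : P.sched n false <;> cases hT : P.sched n true
  · exact absurd (P.hf.1 n) (by simp [hF, hT])
  · -- only s
    by_cases hds : P.cs * |l| < 1
    · have hinv : (0:ℝ) < 1 / (P.cs * |l|) := by positivity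
      have e1 : 1 / (P.cs * |l|) * (P.cs * |l|) = 1 := by field_simp [P.hcs.ne']
      have hnew := step_s' P n _ _ l hx (algo1_start_lt hdns hds (sdir P.es l)) hF hT
      rw [show (1 - (1 - 1/(P.cs * |l|))) * l = 1 / (P.cs * |l|) * l by ring] at hnew
      apply lemC5m P (n+1)
      rw [hnew]
      refine ⟨mul_ne_zero hinv.ne' hl, rfl, ?_, rfl⟩
      rw [newd, abs_of_pos hinv, e1]
    · refine ⟨n+1, ?_⟩
      rw [step_s' P n _ _ l hx (algo1_start_ge hdns hds (sdir P.es l)) hF hT]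
      norm_num
  · -- only r
    by_cases hdr : P.cr * |l| < 1
    · have hinv : (0:ℝ) < 1 / (P.cr * |l|) := by positivity
      have e1 : 1 / (P.cr * |l|) * (P.cr * |l|) = 1 := by field_simp [P.hcr.ne']
      have hnew := step_r' P n _ _ l hx (algo1_start_lt hdnr hdr (sdir P.er l)) hF hT
      rw [show (1 - (1 - 1/(P.cr * |l|))) * l = 1 / (P.cr * |l|) * l by ring] at hnew
      apply lemC5 P (n+1)
      rw [hnew]
      refine ⟨mul_ne_zero hinv.ne' hl, rfl, ?_, rfl⟩
      rw [newd, abs_of_pos hinv, e1]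
    · refine ⟨n+1, ?_⟩
      rw [step_r' P n _ _ l hx (algo1_start_ge hdnr hdr (sdir P.er l)) hF hT]
      norm_num
  · -- both
    by_cases hdr : P.cr * |l| < 1 <;> by_cases hds : P.cs * |l| < 1
    · -- both < 1 : both retreat, C3
      have hir : (0:ℝ) < 1 / (P.cr * |l|) := by positivity
      have his : (0:ℝ) < 1 / (P.cs * |l|) := by positivity
      have er1 : 1 / (P.cr * |l|) * (P.cr * |l|) = 1 := by field_simp [P.hcr.ne']
      have es1 : 1 / (P.cs * |l|) * (P.cs * |l|) = 1 := by field_simp [P.hcs.ne']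
      have er2 : 1 < 1 / (P.cr * |l|) := one_lt_one_div hDr hdr
      have es2 : 1 < 1 / (P.cs * |l|) := one_lt_one_div hDs hds
      have hc : (0:ℝ) < 1 / (P.cr * |l|) + 1 / (P.cs * |l|) - 1 := by linarith
      have hnew := step_both P n _ _ l hx (algo1_start_lt hdnr hdr (sdir P.er l))
        (algo1_start_lt hdns hds (sdir P.es l)) hF hT
      rw [show (1 - (1 - 1/(P.cr * |l|)) - (1 - 1/(P.cs * |l|))) * l =
        (1 / (P.cr * |l|) + 1 / (P.cs * |l|) - 1) * l by ring] at hnew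
      apply lemC3 P (n+1)
      rw [hnew]
      have hgr : 1 < (1 / (P.cr * |l|) + 1 / (P.cs * |l|) - 1) * (P.cr * |l|) := by
        nlinarith [mul_pos (show (0:ℝ) < 1 / (P.cs * |l|) - 1 by linarith) hDr]
      have hgs : 1 < (1 / (P.cr * |l|) + 1 / (P.cs * |l|) - 1) * (P.cs * |l|) := by
        nlinarith [mul_pos (show (0:ℝ) < 1 / (P.cr * |l|) - 1 by linarith) hDs]
      refine ⟨mul_ne_zero hc.ne' hl, rfl, rfl, ?_, ?_, Or.inl ?_⟩
      · rw [newd, abs_of_pos hc]; exact hgr.le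
      · rw [newd, abs_of_pos hc]; exact hgs.le
      · rw [newd, abs_of_pos hc]; exact hgr
    · -- r < 1 ≤ s : C9
      have hir : (0:ℝ) < 1 / (P.cr * |l|) := by positivity
      have er1 : 1 / (P.cr * |l|) * (P.cr * |l|) = 1 := by field_simp [P.hcr.ne']
      have hc : (0:ℝ) < 1 / (P.cr * |l|) - 1 := by
        have := one_lt_one_div hDr hdr
        linarith
      have hnew := step_both P n _ _ l hx (algo1_start_lt hdnr hdr (sdir P.er l))
        (algo1_start_ge hdns hds (sdir P.es l)) hF hT
      rw [show (1 - (1 - 1/(P.cr * |l|)) - 1) * l =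
        (1 / (P.cr * |l|) - 1) * l by ring] at hnew
      apply lemC9 P (n+1)
      rw [hnew]
      refine ⟨mul_ne_zero hc.ne' hl, rfl, ?_, ?_⟩
      · rw [newd, abs_of_pos hc]
        nlinarith
      · show St.s2 (sdir P.es l) = St.s2 (sdir P.es ((1 / (P.cr * |l|) - 1) * l))
        rw [sdir_mul_pos _ hc]
    · -- s < 1 ≤ r : C9m
      have his : (0:ℝ) < 1 / (P.cs * |l|) := by positivity
      have es1 : 1 / (P.cs * |l|) * (P.cs * |l|) = 1 := by field_simp [P.hcs.ne']
      have hc : (0:ℝ) < 1 / (P.cs * |l|) - 1 := by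
        have := one_lt_one_div hDs hds
        linarith
      have hnew := step_both P n _ _ l hx (algo1_start_ge hdnr hdr (sdir P.er l))
        (algo1_start_lt hdns hds (sdir P.es l)) hF hT
      rw [show (1 - 1 - (1 - 1/(P.cs * |l|))) * l =
        (1 / (P.cs * |l|) - 1) * l by ring] at hnew
      apply lemC9m P (n+1)
      rw [hnew]
      refine ⟨mul_ne_zero hc.ne' hl, rfl, ?_, ?_⟩
      · rw [newd, abs_of_pos hc]
        nlinarith
      · show St.s2 (sdir P.er l) = St.s2 (sdir P.er ((1 / (P.cs * |l|) - 1) * l))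
        rw [sdir_mul_pos _ hc]
    · -- both ≥ 1 : C2
      have hnew := step_both P n _ _ l hx (algo1_start_ge hdnr hdr (sdir P.er l))
        (algo1_start_ge hdns hds (sdir P.es l)) hF hT
      rw [show (1 - 1 - 1 : ℝ) * l = -l by ring] at hnew
      apply lemC2' P (n+1)
      rw [hnew]
      refine ⟨by simpa using hl, ⟨sdir P.er l, rfl, ?_⟩, ⟨sdir P.es l, rfl, ?_⟩,
        Or.inl (by rw [abs_neg]; linarith)⟩ <;>
        · rw [sdir_neg _ hl]
          exact Ne.symm (dflip_ne _)

end RVaux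
namespace RVaux

lemma freeze (u : Bool → ℝ) (A : Bool → Frame) (sched : ℕ → Bool → Bool) (c0 : Config)
    (n : ℕ) (h : (run u A sched c0 n).pos true = (run u A sched c0 n).pos false) :
    ∀ m, n ≤ m →
      (run u A sched c0 m).pos false = (run u A sched c0 n).pos false ∧
      (run u A sched c0 m).pos true = (run u A sched c0 n).pos false := by
  intro m hm
  induction m, hm using Nat.le_induction with
  | base => exact ⟨rfl, h⟩
  | succ m hm ih =>
    obtain ⟨ih1, ih2⟩ := ih
    have key : ∀ i, (run u A sched c0 m).pos i = (run u A sched c0 n).pos false := by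
      intro i; cases i
      · exact ih1
      · exact ih2
    have hstep : run u A sched c0 (m+1) = stepConfig u A (sched m) (run u A sched c0 m) := rfl
    have hrob : ∀ i, (stepRobot u A (run u A sched c0 m) i).1 =
        (run u A sched c0 n).pos false := by
      intro i
      have hd : obsDist (u i) ((run u A sched c0 m).pos i)
          ((run u A sched c0 m).pos (!i)) = 0 := by
        rw [key i, key (!i)]
        simp [obsDist]
      simp only [stepRobot, hd, algo1_zero, zero_smul, add_zero]
      exact key i
    constructor <;>
      · rw [hstep]
        simp only [stepConfig]
        first
          | (cases hact : sched m false
             · simp only [hact, if_false, Bool.false_eq_true]; exact ih1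
             · simp only [hact, if_true]; exact hrob false)
          | (cases hact : sched m true
             · simp only [hact, if_false, Bool.false_eq_true]; exact ih2
             · simp only [hact, if_true]; exact hrob true)

/-- The scalar core: both robots starting in `S_start`, the coefficient
eventually vanishes. (Proved below.) -/
theorem core (P : Par) (h1 : P.x0.1 = .start) (h2 : P.x0.2.1 = .start) : P.Z := by
  by_cases h : (P.X 0).2.2 = 0
  · exact ⟨0, h⟩
  · exact lemC0 P 0 ⟨h, h1, h2⟩

end RVaux


open RVaux

/-- Theorem: `(S_start, S_start, [0, ∞), [0, ∞))↓`. In SSynch with rigid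
movements, two finite-state robots running Algorithm 1, both starting in state
`S_start`, solve Rendezvous from every pair of initial positions, for every
pair of unit distances, every pair of local orthogonal frames, and every fair
schedule: Rendezvous of two `FState` robots in SSynch is solvable with six
internal states, even without unit distance agreement. -/
theorem rendezvous_fstate_ssynch :
    Down Cond.start Cond.start (Set.Ici (0 : ℝ)) (Set.Ici (0 : ℝ)) ∧
    ∀ (u : Bool → ℝ) (A : Bool → Frame), (∀ i, 0 < u i) →
      ∀ pos0 : Bool → Pt, ∀ sched : ℕ → Bool → Bool, FairSched sched →
        Solves u A sched ⟨pos0, fun _ => St.start⟩ := by 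
  have main : Down Cond.start Cond.start (Set.Ici (0 : ℝ)) (Set.Ici (0 : ℝ)) := by
    intro u A hu c0 hr _ hs _ sched hf
    have hr' : c0.st false = .start := hr
    have hs' : c0.st true = .start := hs
    by_cases hw : c0.pos true - c0.pos false = 0
    · have heq : (run u A sched c0 0).pos true = (run u A sched c0 0).pos false :=
        sub_eq_zero.1 hw
      refine ⟨0, fun n hn i => ?_⟩
      have := freeze u A sched c0 0 heq n hn
      cases i
      · exact this.1
      · exact this.2
    · set w := c0.pos true - c0.pos false with hwdef
      have hcr : 0 < ‖w‖ / u false := div_pos (norm_pos_iff.2 hw) (hu false)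
      have hcs : 0 < ‖w‖ / u true := div_pos (norm_pos_iff.2 hw) (hu true)
      set P : Par := ⟨‖w‖ / u false, ‖w‖ / u true, obsDir (A false w), obsDir (A true (-w)),
        sched, (c0.st false, c0.st true, 1), hcr, hcs, hf⟩ with hPdef
      obtain ⟨m, hm⟩ := core P hr' hs'
      have hsim := (sim u A sched c0 hu w hw rfl m).2.2
      have hposeq : (run u A sched c0 m).pos true = (run u A sched c0 m).pos false := by
        have : P.X m = srun (‖w‖ / u false) (‖w‖ / u true) (obsDir (A false w))
            (obsDir (A true (-w))) sched (c0.st false, c0.st true, 1) m := rfl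
        rw [← this, hm, zero_smul] at hsim
        exact sub_eq_zero.1 hsim
      refine ⟨m, fun n hn i => ?_⟩
      have := freeze u A sched c0 m hposeq n hn
      cases i
      · exact this.1
      · exact this.2
  refine ⟨main, fun u A hu pos0 sched hf => ?_⟩
  refine main u A hu ⟨pos0, fun _ => St.start⟩ rfl ?_ rfl ?_ sched hf
  · exact div_nonneg (norm_nonneg _) (hu false).le
  · exact div_nonneg (norm_nonneg _) (hu true).le
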